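/- Energy estimate for the split-form semi-discretization of linear convection with periodic coupling: if the diagonal metric matrices [Al m] are symmetric and commute with the diagonal norm matrix P (tensor-product of diagonal SBP norms), then for the operator M = (1/2) Σ_{l,m} a_m (Dξl [Al m] + [Al m] Dξl), the symmetric part of P·M reduces to boundary terms: P M + M^T P = (1/2) Σ_{l,m} a_m (E_l [Al m] + [Al m] E_l), where E_l is the tensor-product boundary matrix in direction l. -/
import Mathlib


open Matrix BigOperators

lemma diag_symm_aux {N : ℕ} {A : Matrix (Fin N) (Fin N) ℝ} (hA : A.IsDiag) : Aᵀ = A := by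
  ext i j
  by_cases h : i = j
  · subst h; rfl
  · rw [Matrix.transpose_apply, hA h, hA (Ne.symm h)]

lemma diag_mul_comm_aux {N : ℕ} {P A : Matrix (Fin N) (Fin N) ℝ}
    (hP : P.IsDiag) (hA : A.IsDiag) : P * A = A * P := by
  ext i j
  simp only [Matrix.mul_apply]
  apply Finset.sum_congr rfl
  intro k _
  by_cases hik : i = k
  · subst hik
    by_cases hij : i = j
    · subst hij; ring
    · rw [hA hij, hP hij]; ring
  · rw [hP hik, hA hik]; ring

/-- Energy estimate for the split-form semi-discretization of linear
convection: the symmetric part of `P·M` reduces to boundary terms. -/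
theorem splitform_energy_boundary_terms
    (N : ℕ) (P : Matrix (Fin N) (Fin N) ℝ)
    (D Q E : Fin 3 → Matrix (Fin N) (Fin N) ℝ)
    (A : Fin 3 → Fin 3 → Matrix (Fin N) (Fin N) ℝ)
    (a : Fin 3 → ℝ)
    (hPdiag : P.IsDiag) (hPposdef : P.PosDef)
    (hAdiag : ∀ l m, (A l m).IsDiag)
    (hPD : ∀ l, P * D l = Q l)
    (hSBP : ∀ l, Q l + (Q l)ᵀ = E l)
    (M : Matrix (Fin N) (Fin N) ℝ)
    (hM : M = (1 / 2 : ℝ) • ∑ l, ∑ m, a m • (D l * A l m + A l m * D l)) :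
    P * M + Mᵀ * P =
      (1 / 2 : ℝ) • ∑ l, ∑ m, a m • (E l * A l m + A l m * E l) := by
  have key : ∀ l m, P * (D l * A l m + A l m * D l)
      + (D l * A l m + A l m * D l)ᵀ * P = E l * A l m + A l m * E l := by
    intro l m
    have hPsym : Pᵀ = P := diag_symm_aux hPdiag
    have hAsym : (A l m)ᵀ = A l m := diag_symm_aux (hAdiag l m)
    have hDtP : (D l)ᵀ * P = (Q l)ᵀ := by
      rw [← hPsym, ← Matrix.transpose_mul, hPD l]
    calc P * (D l * A l m + A l m * D l) + (D l * A l m + A l m * D l)ᵀ * P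
        = P * D l * A l m + P * (A l m) * D l
          + (A l m)ᵀ * ((D l)ᵀ * P) + (D l)ᵀ * ((A l m)ᵀ * P) := by
          simp only [Matrix.mul_add, Matrix.add_mul, Matrix.transpose_mul,
            Matrix.transpose_add, Matrix.mul_assoc]
          abel
      _ = Q l * A l m + A l m * Q l + A l m * (Q l)ᵀ + (Q l)ᵀ * A l m := by
          rw [hPD l, diag_mul_comm_aux hPdiag (hAdiag l m), Matrix.mul_assoc, hPD l,
            hAsym, hDtP, diag_mul_comm_aux (hAdiag l m) hPdiag, ← Matrix.mul_assoc, hDtP]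
      _ = E l * A l m + A l m * E l := by
          rw [← hSBP l]
          noncomm_ring
  subst hM
  simp only [Matrix.mul_smul, Matrix.smul_mul, Matrix.transpose_smul, Matrix.transpose_sum,
    Matrix.mul_sum, Matrix.sum_mul, ← smul_add, ← Finset.sum_add_distrib]
  congr 1
  apply Finset.sum_congr rfl; intro l _
  apply Finset.sum_congr rfl; intro m _
  rw [key l m]
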